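/- arXiv:q-alg/9604005 — 4 statements merged into one kernel-verified Lean document; each statement's English description precedes it below -/
import Mathlib

section
/- Let N ≥ 2, let σ be a permutation of {1,…,N} which is a cycle whose support is all of {1,…,N} (an N-cycle), and fix an index i_0. Then the matrix A, indexed by the indices different from i_0 and defined by A_{ij} = 1 if σ(j) = i and A_{ij} = 0 otherwise (entries in ℂ), is nilpotent. -/
/-- If `σ` is an `N`-cycle on `{1,…,N}` (`N ≥ 2`), then the compression of its permutation
matrix obtained by deleting the row and column of an index `i0` is nilpotent. -/
theorem stmt_4 (N : ℕ) (hN : 2 ≤ N) (σ : Equiv.Perm (Fin N))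
    (hcycle : σ.IsCycle) (hsupp : σ.support = Finset.univ) (i0 : Fin N) :
    IsNilpotent
      (Matrix.of fun i j : {i : Fin N // i ≠ i0} =>
        if σ j.val = i.val then (1 : ℂ) else 0) := by
  set A : Matrix {i : Fin N // i ≠ i0} {i : Fin N // i ≠ i0} ℂ :=
    Matrix.of fun i j : {i : Fin N // i ≠ i0} =>
      if σ j.val = i.val then (1 : ℂ) else 0 with hA
  have key : ∀ k : ℕ, ∀ i j : {i : Fin N // i ≠ i0}, (A ^ k) i j ≠ 0 →
      (σ ^ k) j.val = i.val ∧ ∀ m, 1 ≤ m → m < k → (σ ^ m) j.val ≠ i0 := by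
    intro k
    induction k with
    | zero =>
      intro i j h
      simp only [pow_zero, Matrix.one_apply, ne_eq, ite_eq_right_iff, not_forall] at h
      refine ⟨by simp [h.1], fun m hm hm' => absurd hm' (by omega)⟩
    | succ k ih =>
      intro i j h
      rw [pow_succ'] at h
      have := Finset.exists_ne_zero_of_sum_ne_zero (by simpa [Matrix.mul_apply] using h)
      obtain ⟨l, -, hl⟩ := this
      have h1 : A i l ≠ 0 := fun hz => hl (by simp [hz])
      have h2 : (A ^ k) l j ≠ 0 := fun hz => hl (by simp [hz])
      have hσl : σ l.val = i.val := by
        by_contra hc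
        apply h1
        simp [hA, hc]
      obtain ⟨hkl, hmid⟩ := ih l j h2
      constructor
      · rw [pow_succ']
        simp only [Equiv.Perm.mul_apply, hkl, hσl]
      · intro m hm hm'
        rcases Nat.lt_or_ge m k with hmk | hmk
        · exact hmid m hm hmk
        · have : m = k := by omega
          subst this
          rw [hkl]
          exact l.2
  refine ⟨N, ?_⟩
  ext i j
  by_contra h
  obtain ⟨hN', hmid⟩ := key N i j (by simpa using h)
  have hj : σ j.val ≠ j.val := by
    rw [← Equiv.Perm.mem_support, hsupp]; exact Finset.mem_univ _
  have hi0 : σ i0 ≠ i0 := by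
    rw [← Equiv.Perm.mem_support, hsupp]; exact Finset.mem_univ _
  have hsc : σ.SameCycle j.val i0 := hcycle.sameCycle hj hi0
  obtain ⟨m, hm0, hmle, hmeq⟩ := hsc.exists_pow_eq''
  have hord : orderOf σ = N := by
    rw [hcycle.orderOf, hsupp, Finset.card_univ, Fintype.card_fin]
  rw [hord] at hmle
  rcases Nat.lt_or_ge m N with hmN | hmN
  · exact hmid m hm0 hmN hmeq
  · have : m = N := by omega
    subst this
    rw [hN'] at hmeq
    exact i.2 hmeq
end

section
/- There exists a family of polynomials T̃_j ∈ ℚ[X], for j ≥ 1, with deg T̃_j ≤ 2j, such that for every natural number n the polynomial Q_n(h) := ∏_{l=1}^{n} ((1+h)^l − 1) ∈ ℚ[h] satisfies: the coefficient of h^k in Q_n vanishes for k < n, the coefficient of h^n equals n!, and for every j ≥ 1 the coefficient of h^{n+j} equals n! · T̃_j(n). Equivalently, ∏_{l=1}^{n} ((1+h)^l − 1)/h = n!·(1 + ∑_{j≥1} h^j T̃_j(n)). -/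
open Polynomial

private lemma exists_antideriv' : ∀ (d : ℕ) (q : Polynomial ℚ), q.natDegree ≤ d →
    ∃ S : Polynomial ℚ, S.natDegree ≤ d + 1 ∧ S.eval 0 = 0 ∧
      ∀ x : ℚ, S.eval (x + 1) - S.eval x = q.eval x := by
  intro d
  induction d with
  | zero =>
    intro q hq
    refine ⟨Polynomial.C (q.coeff 0) * X, (natDegree_C_mul_le _ _).trans (by simp), by simp, ?_⟩
    intro x
    rw [Polynomial.eq_C_of_natDegree_le_zero hq]
    simp; ring
  | succ d ih =>
    intro q hq
    set c := q.coeff (d + 1) with hc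
    set P1 : Polynomial ℚ := C (c / (d + 2)) * X ^ (d + 2) with hP1
    set D1 : Polynomial ℚ := C (c / (d + 2)) * ((X + 1) ^ (d + 2) - X ^ (d + 2)) with hD1
    have hd2 : ((d : ℚ) + 2) ≠ 0 := by positivity
    have hD1c : ∀ m : ℕ, D1.coeff m = c / (d + 2) * ((d+2).choose m - if m = d + 2 then 1 else 0) := by
      intro m
      simp [hD1, coeff_C_mul, coeff_sub, coeff_X_add_one_pow, coeff_X_pow]
    have hD1deg : D1.natDegree ≤ d + 1 := by
      rw [natDegree_le_iff_coeff_eq_zero]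
      intro m hm
      rw [hD1c]
      rcases eq_or_lt_of_le (Nat.succ_le_of_lt hm) with h | h
      · rw [← h]; simp
      · rw [Nat.choose_eq_zero_of_lt h, if_neg (by omega)]; simp
    have hD1coeff : D1.coeff (d + 1) = c := by
      rw [hD1c, if_neg (by omega)]
      have : ((d+2).choose (d+1) : ℚ) = (d : ℚ) + 2 := by
        rw [show d + 2 = (d+1) + 1 from rfl, Nat.choose_succ_self_right]
        push_cast; ring
      rw [this]
      field_simp
      simp
    have hqD : (q - D1).natDegree ≤ d := by
      rw [natDegree_le_iff_coeff_eq_zero]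
      intro m hm
      rcases eq_or_lt_of_le (Nat.succ_le_of_lt hm) with h | h
      · rw [coeff_sub, ← h, hD1coeff, ← hc, sub_self]
      · rw [coeff_sub, natDegree_le_iff_coeff_eq_zero.mp hq m h,
          natDegree_le_iff_coeff_eq_zero.mp hD1deg m (by omega), sub_self]
    obtain ⟨S0, hS0deg, hS00, hS0⟩ := ih (q - D1) hqD
    refine ⟨S0 + P1, ?_, by simp [hP1, hS00], ?_⟩
    · exact (natDegree_add_le _ _).trans (max_le (hS0deg.trans (by omega))
        ((natDegree_C_mul_le _ _).trans (by simp)))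
    · intro x
      have h1 := hS0 x
      have h2 : P1.eval (x + 1) - P1.eval x = D1.eval x := by
        simp [hP1, hD1]; ring
      simp only [eval_add]
      rw [show S0.eval (x+1) + P1.eval (x+1) - (S0.eval x + P1.eval x)
        = (S0.eval (x+1) - S0.eval x) + (P1.eval (x+1) - P1.eval x) by ring, h1, h2]
      simp

private lemma exists_antideriv (q : Polynomial ℚ) :
    ∃ S : Polynomial ℚ, S.natDegree ≤ q.natDegree + 1 ∧ S.eval 0 = 0 ∧
      ∀ x : ℚ, S.eval (x + 1) - S.eval x = q.eval x :=
  exists_antideriv' q.natDegree q le_rfl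

noncomputable def antid (q : Polynomial ℚ) : Polynomial ℚ := (exists_antideriv q).choose

lemma antid_deg (q : Polynomial ℚ) : (antid q).natDegree ≤ q.natDegree + 1 :=
  (exists_antideriv q).choose_spec.1
lemma antid_zero (q : Polynomial ℚ) : (antid q).eval 0 = 0 :=
  (exists_antideriv q).choose_spec.2.1
lemma antid_step (q : Polynomial ℚ) (x : ℚ) :
    (antid q).eval (x + 1) - (antid q).eval x = q.eval x :=
  (exists_antideriv q).choose_spec.2.2 x

noncomputable def pp (i : ℕ) : Polynomial ℚ :=
  C (((i+1).factorial : ℚ))⁻¹ * (descPochhammer ℚ i).comp (X - 1)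

lemma pp_deg (i : ℕ) : (pp i).natDegree ≤ i := by
  refine (natDegree_C_mul_le _ _).trans ?_
  refine (natDegree_comp_le).trans ?_
  rw [descPochhammer_natDegree]
  calc i * (X - 1 : Polynomial ℚ).natDegree ≤ i * 1 := Nat.mul_le_mul_left i (by
        simpa using natDegree_sub_le (X : Polynomial ℚ) 1)
    _ = i := by omega

lemma pp_eval (k n : ℕ) : ((n : ℚ) + 1) * (pp k).eval ((n : ℚ) + 1) = ((n+1).choose (k+1) : ℚ) := by
  have h1 : (pp k).eval ((n : ℚ) + 1) = (((k+1).factorial : ℚ))⁻¹ * (n.descFactorial k : ℚ) := by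
    rw [pp, eval_mul, eval_C, eval_comp, eval_sub, eval_X, eval_one,
      show ((n : ℚ) + 1 - 1) = (n : ℚ) by ring, descPochhammer_eval_eq_descFactorial]
  rw [h1]
  have h2 : ((n+1).descFactorial (k+1) : ℚ) = ((n:ℚ)+1) * (n.descFactorial k : ℚ) := by
    rw [Nat.succ_descFactorial_succ]; push_cast; ring
  have h3 : ((n+1).descFactorial (k+1) : ℚ) = ((k+1).factorial : ℚ) * ((n+1).choose (k+1) : ℚ) := by
    rw [Nat.descFactorial_eq_factorial_mul_choose]; push_cast; ring
  have hf : ((k+1).factorial : ℚ) ≠ 0 := by positivity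
  field_simp
  rw [← h2, h3]
noncomputable def Tt : ℕ → Polynomial ℚ
  | 0 => 1
  | (j+1) => antid (∑ i ∈ (Finset.range (j+1)).attach,
      Tt i.1 * (pp (j+1-i.1)).comp (X + 1))
  decreasing_by exact Finset.mem_range.mp i.2

lemma Tt_succ (j : ℕ) : Tt (j+1) = antid (∑ i ∈ Finset.range (j+1),
    Tt i * (pp (j+1-i)).comp (X + 1)) := by
  rw [Tt]
  congr 1
  exact Finset.sum_attach (Finset.range (j+1)) (fun i => Tt i * (pp (j+1-i)).comp (X + 1))

lemma Tt_deg : ∀ j, (Tt j).natDegree ≤ 2 * j := by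
  intro j
  induction j using Nat.strong_induction_on with
  | _ j ih =>
    match j with
    | 0 => simp [Tt]
    | (j+1) =>
      rw [Tt_succ]
      refine (antid_deg _).trans ?_
      have : (∑ i ∈ Finset.range (j+1), Tt i * (pp (j+1-i)).comp (X + 1)).natDegree
          ≤ 2 * j + 1 := by
        refine natDegree_sum_le_of_forall_le _ _ ?_
        intro i hi
        have hi' := Finset.mem_range.mp hi
        refine (natDegree_mul_le).trans ?_
        have h1 : (Tt i).natDegree ≤ 2 * i := ih i (by omega)
        have h2 : ((pp (j+1-i)).comp (X + 1)).natDegree ≤ j + 1 - i := by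
          refine natDegree_comp_le.trans ?_
          calc (pp (j+1-i)).natDegree * (X + 1 : Polynomial ℚ).natDegree
              ≤ (j+1-i) * 1 := Nat.mul_le_mul (pp_deg _) (by
                simpa using natDegree_add_le (X : Polynomial ℚ) 1)
            _ = j + 1 - i := by omega
        omega
      omega

lemma Tt_zero_eval (j : ℕ) (hj : 1 ≤ j) : (Tt j).eval 0 = 0 := by
  obtain ⟨m, rfl⟩ := Nat.exists_eq_add_of_le hj
  rw [show 1 + m = m + 1 by omega, Tt_succ]
  exact antid_zero _

lemma Tt_rec (j n : ℕ) :
    ((n : ℚ) + 1) * (Tt j).eval ((n : ℚ) + 1)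
      = ∑ i ∈ Finset.range (j+1), (Tt (j-i)).eval (n : ℚ) * ((n+1).choose (i+1) : ℚ) := by
  match j with
  | 0 => simp [Tt]
  | (j+1) =>
    have hstep := antid_step (∑ i ∈ Finset.range (j+1),
        Tt i * (pp (j+1-i)).comp (X + 1)) (n : ℚ)
    rw [← Tt_succ] at hstep
    have hg : (∑ i ∈ Finset.range (j+1), Tt i * (pp (j+1-i)).comp (X + 1)).eval (n:ℚ)
        = ∑ i ∈ Finset.range (j+1), (Tt i).eval (n:ℚ) * (pp (j+1-i)).eval ((n:ℚ)+1) := by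
      rw [eval_finset_sum]
      refine Finset.sum_congr rfl fun i _ => ?_
      rw [eval_mul, eval_comp, eval_add, eval_X, eval_one]
    have key : ((n:ℚ)+1) * (Tt (j+1)).eval ((n:ℚ)+1)
        = (Tt (j+1)).eval (n:ℚ) * ((n+1).choose 1 : ℚ)
          + ∑ i ∈ Finset.range (j+1), (Tt i).eval (n:ℚ) * ((n+1).choose (j+2-i) : ℚ) := by
      have heq : (Tt (j+1)).eval ((n:ℚ)+1) = (Tt (j+1)).eval (n:ℚ)
          + ∑ i ∈ Finset.range (j+1), (Tt i).eval (n:ℚ) * (pp (j+1-i)).eval ((n:ℚ)+1) := by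
        rw [← hg, ← hstep]; ring
      have hsum : ∑ i ∈ Finset.range (j+1),
            ((n:ℚ)+1) * ((Tt i).eval (n:ℚ) * (pp (j+1-i)).eval ((n:ℚ)+1))
          = ∑ i ∈ Finset.range (j+1), (Tt i).eval (n:ℚ) * ((n+1).choose (j+2-i) : ℚ) := by
        refine Finset.sum_congr rfl fun i hi => ?_
        have hi' := Finset.mem_range.mp hi
        rw [show ((n:ℚ)+1) * ((Tt i).eval (n:ℚ) * (pp (j+1-i)).eval ((n:ℚ)+1))
          = (Tt i).eval (n:ℚ) * (((n:ℚ)+1) * (pp (j+1-i)).eval ((n:ℚ)+1)) by ring, pp_eval]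
        rw [show j+1-i+1 = j+2-i by omega]
      rw [heq, mul_add, Finset.mul_sum ((Finset.range (j+1)))
        (fun i => (Tt i).eval (n:ℚ) * (pp (j+1-i)).eval ((n:ℚ)+1)) ((n:ℚ)+1),
        hsum, Nat.choose_one_right]
      push_cast
      ring
    rw [key, Finset.sum_range_succ' (fun i => (Tt (j+1-i)).eval (n:ℚ) * ((n+1).choose (i+1) : ℚ)) (j+1)]
    simp only [Nat.sub_zero, Nat.zero_add]
    rw [add_comm]
    congr 1
    rw [← Finset.sum_range_reflect (fun i => (Tt (j+1-(i+1))).eval (n:ℚ) * ((n+1).choose (i+1+1) : ℚ)) (j+1)]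
    refine Finset.sum_congr rfl fun i hi => ?_
    have hi' := Finset.mem_range.mp hi
    rw [show j + 1 - (j + 1 - 1 - i + 1) = i by omega, show j + 1 - 1 - i + 1 + 1 = j + 2 - i by omega]

lemma Tt_zero : Tt 0 = 1 := by rw [Tt]

noncomputable def Qn (n : ℕ) : Polynomial ℚ :=
  ∏ l ∈ Finset.Icc 1 n, ((1 + Polynomial.X) ^ l - 1)

lemma key : ∀ n : ℕ, (∀ k : ℕ, k < n → (Qn n).coeff k = 0) ∧
    ∀ j : ℕ, (Qn n).coeff (n + j) = (n.factorial : ℚ) * (Tt j).eval (n : ℚ) := by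
  intro n
  induction n with
  | zero =>
    constructor
    · intro k hk; omega
    · intro j
      have : Qn 0 = 1 := by simp [Qn]
      rw [this]
      rcases Nat.eq_zero_or_pos j with rfl | hj
      · simp [Tt_zero]
      · rw [Nat.cast_zero, Tt_zero_eval j hj]
        simp [Polynomial.coeff_one, Nat.one_le_iff_ne_zero.mp hj]
  | succ n ih =>
    obtain ⟨ih1, ih2⟩ := ih
    have hQ : Qn (n+1) = Qn n * ((1 + X) ^ (n+1) - 1) := by
      rw [Qn, Finset.prod_Icc_succ_top (by omega)]
      rfl
    set R : Polynomial ℚ := (1 + X) ^ (n+1) - 1 with hR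
    have hR0 : R.coeff 0 = 0 := by
      simp [hR, coeff_one_add_X_pow]
    have hRb : ∀ b : ℕ, 1 ≤ b → R.coeff b = ((n+1).choose b : ℚ) := by
      intro b hb
      simp [hR, coeff_one_add_X_pow, Polynomial.coeff_one, Nat.one_le_iff_ne_zero.mp hb]
    have hcoeff : ∀ k : ℕ, (Qn (n+1)).coeff k
        = ∑ a ∈ Finset.range (k+1), (Qn n).coeff a * R.coeff (k - a) := by
      intro k
      rw [hQ, coeff_mul, Finset.Nat.sum_antidiagonal_eq_sum_range_succ_mk]
    have part1 : ∀ k : ℕ, k < n + 1 → (Qn (n+1)).coeff k = 0 := by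
      intro k hk
      rw [hcoeff]
      refine Finset.sum_eq_zero fun a ha => ?_
      have ha' := Finset.mem_range.mp ha
      rcases lt_or_ge a n with h | h
      · rw [ih1 a h, zero_mul]
      · have : k - a = 0 := by omega
        rw [this, hR0, mul_zero]
    refine ⟨part1, ?_⟩
    intro j
    rw [hcoeff]
    have hsubset : Finset.Icc n (n+j) ⊆ Finset.range (n + 1 + j + 1) := by
      intro a ha
      simp only [Finset.mem_Icc] at ha
      exact Finset.mem_range.mpr (by omega)
    rw [← Finset.sum_subset hsubset (by
      intro a ha hna
      simp only [Finset.mem_Icc, not_and, not_le] at hna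
      have ha' := Finset.mem_range.mp ha
      rcases lt_or_ge a n with h | h
      · rw [ih1 a h, zero_mul]
      · have : n + 1 + j - a = 0 := by omega
        rw [this, hR0, mul_zero])]
    rw [show Finset.Icc n (n+j) = Finset.Ico n (n+j+1) from by rw [Finset.Ico_add_one_right_eq_Icc],
      Finset.sum_Ico_eq_sum_range, show n + j + 1 - n = j + 1 from by omega]
    have hterm : ∀ s ∈ Finset.range (j+1),
        (Qn n).coeff (n + s) * R.coeff (n + 1 + j - (n + s))
        = (n.factorial : ℚ) * ((Tt s).eval (n:ℚ) * ((n+1).choose (j+1-s) : ℚ)) := by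
      intro s hs
      have hs' := Finset.mem_range.mp hs
      rw [show n + 1 + j - (n + s) = j + 1 - s by omega, ih2 s, hRb (j+1-s) (by omega)]
      ring
    rw [Finset.sum_congr rfl hterm, ← Finset.mul_sum]
    have hfac : ((n+1).factorial : ℚ) = (n.factorial : ℚ) * ((n:ℚ) + 1) := by
      rw [Nat.factorial_succ]; push_cast; ring
    rw [hfac, mul_assoc]
    congr 1
    rw [show ((n+1 : ℕ) : ℚ) = (n : ℚ) + 1 by push_cast; ring, Tt_rec j n]
    rw [← Finset.sum_range_reflect (fun i => (Tt (j-i)).eval (n:ℚ) * ((n+1).choose (i+1) : ℚ)) (j+1)]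
    refine Finset.sum_congr rfl fun s hs => ?_
    have hs' := Finset.mem_range.mp hs
    rw [show j - (j + 1 - 1 - s) = s by omega, show j + 1 - 1 - s + 1 = j + 1 - s by omega]

open Polynomial in
/-- Lemma A.1 (single-product form): there are polynomials `T̃_j ∈ ℚ[X]` (`j ≥ 1`) of degree
at most `2j` such that `∏_{l=1}^{n} ((1+h)^l - 1) = h^n · n! · (1 + ∑_{j≥1} h^j T̃_j(n))`,
i.e. the coefficient of `h^k` vanishes for `k < n`, equals `n!` for `k = n`, and equals
`n! · T̃_j(n)` for `k = n + j`, `j ≥ 1`. -/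
theorem stmt_6 :
    ∃ T : ℕ → Polynomial ℚ,
      (∀ j : ℕ, 1 ≤ j → (T j).natDegree ≤ 2 * j) ∧
      ∀ n : ℕ,
        let Q : Polynomial ℚ := ∏ l ∈ Finset.Icc 1 n, ((1 + Polynomial.X) ^ l - 1)
        (∀ k : ℕ, k < n → Q.coeff k = 0) ∧
        Q.coeff n = (n.factorial : ℚ) ∧
        ∀ j : ℕ, 1 ≤ j → Q.coeff (n + j) = (n.factorial : ℚ) * (T j).eval (n : ℚ) := by
  refine ⟨Tt, fun j _ => Tt_deg j, fun n => ?_⟩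
  intro Q
  obtain ⟨h1, h2⟩ := key n
  refine ⟨fun k hk => h1 k hk, ?_, fun j _ => h2 j⟩
  have := h2 0
  rw [Tt_zero] at this
  simp at this; exact this
end

section
/- There exists a family of polynomials T_j ∈ ℚ[X, Y], for j ≥ 1, with total degree deg T_j ≤ 2j, such that for all natural numbers m, n with n ≤ m the following identity holds in the ring of formal power series ℚ[[h]]: ∏_{l=m−n+1}^{m} ((1+h)^l − 1) = (∏_{l=1}^{n} ((1+h)^l − 1)) · G_{m,n}, where G_{m,n} ∈ ℚ[[h]] is the power series whose coefficient of h^0 is binom(m, n) and whose coefficient of h^j for j ≥ 1 is binom(m, n) · T_j(m, n). -/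
open Finset

noncomputable section Stmt7Aux

namespace Stmt7

abbrev R2 := MvPolynomial (Fin 2) ℚ

/-- value function `e_i(x) = (1/(i+1)!) ∏_{t<i} (x - (t+1))`. -/
def ef (i : ℕ) (x : ℚ) : ℚ := (((i+1).factorial : ℚ))⁻¹ * ∏ t ∈ range i, (x - (t+1))

/-- `e_i` as a polynomial in the variable `v`. -/
def epoly (i : ℕ) (v : Fin 2) : R2 :=
  MvPolynomial.C ((((i+1).factorial : ℚ))⁻¹) *
    ∏ t ∈ range i, (MvPolynomial.X v - MvPolynomial.C ((t : ℚ) + 1))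

lemma eval_epoly (i : ℕ) (v : Fin 2) (x : Fin 2 → ℚ) :
    MvPolynomial.eval x (epoly i v) = ef i (x v) := by
  simp [epoly, ef]

lemma epoly_totalDegree (i : ℕ) (v : Fin 2) : (epoly i v).totalDegree ≤ i := by
  refine le_trans (MvPolynomial.totalDegree_mul _ _) ?_
  rw [MvPolynomial.totalDegree_C, zero_add]
  refine le_trans (MvPolynomial.totalDegree_finset_prod _ _) ?_
  have h : ∀ t ∈ range i,
      (MvPolynomial.X v - MvPolynomial.C ((t : ℚ) + 1) : R2).totalDegree ≤ 1 := by
    intro t _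
    refine le_trans (MvPolynomial.totalDegree_sub _ _) (max_le ?_ ?_)
    · exact le_of_eq (MvPolynomial.totalDegree_X v)
    · rw [MvPolynomial.totalDegree_C]; omega
  calc ∑ t ∈ range i, (MvPolynomial.X v - MvPolynomial.C ((t : ℚ) + 1) : R2).totalDegree
      ≤ ∑ t ∈ range i, 1 := Finset.sum_le_sum h
    _ = i := by simp

def vpoly (j : ℕ) : R2 :=
  if j = 0 then 1
  else epoly j 0 - ∑ i ∈ (Finset.Icc 1 j).attach, epoly i.1 1 * vpoly (j - i.1)
termination_by j
decreasing_by
  have hi := Finset.mem_Icc.mp i.2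
  omega

lemma vpoly_zero : vpoly 0 = 1 := by rw [vpoly]; simp

lemma vpoly_totalDegree (j : ℕ) : (vpoly j).totalDegree ≤ j := by
  induction j using Nat.strong_induction_on with
  | _ j ih =>
    rw [vpoly]
    by_cases hj : j = 0
    · simp [hj, MvPolynomial.totalDegree_one]
    · simp only [hj, if_false]
      refine le_trans (MvPolynomial.totalDegree_sub _ _) (max_le (epoly_totalDegree _ _) ?_)
      refine MvPolynomial.totalDegree_finsetSum_le ?_
      rintro ⟨i, hi⟩ -
      dsimp only
      have hi' := Finset.mem_Icc.mp hi
      refine le_trans (MvPolynomial.totalDegree_mul _ _) ?_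
      have h1 := epoly_totalDegree i (1 : Fin 2)
      have h2 := ih (j - i) (by omega)
      omega

/-- value of `vpoly`. -/
def vf (j : ℕ) (x y : ℚ) : ℚ := MvPolynomial.eval ![x, y] (vpoly j)

lemma vf_zero (x y : ℚ) : vf 0 x y = 1 := by
  rw [vf, vpoly]; simp

/-- splitting a range sum -/
lemma sum_range_split {M : Type*} [AddCommMonoid M] (f : ℕ → M) (n : ℕ) :
    ∑ k ∈ range (n+1), f k = f 0 + ∑ k ∈ Icc 1 n, f k := by
  induction n with
  | zero => simp
  | succ n ih =>
      rw [Finset.sum_range_succ, ih, Finset.sum_Icc_succ_top (by omega), add_assoc]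

lemma ef_zero (x : ℚ) : ef 0 x = 1 := by simp [ef]

lemma vf_rec (j : ℕ) (x y : ℚ) :
    ∑ i ∈ range (j+1), ef i y * vf (j-i) x y = ef j x := by
  rw [sum_range_split]
  by_cases hj : j = 0
  · subst hj; simp [vf_zero, ef_zero]
  · have hv : vf j x y =
        ef j x - ∑ i ∈ Icc 1 j, ef i y * vf (j-i) x y := by
      rw [vf, vpoly]
      simp only [hj, if_false]
      rw [map_sub, eval_epoly]
      have hs : (MvPolynomial.eval ![x,y]) (∑ i ∈ (Icc 1 j).attach, epoly i.1 1 * vpoly (j - i.1))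
          = ∑ i ∈ Icc 1 j, ef i y * vf (j-i) x y := by
        rw [map_sum, ← Finset.sum_attach (Icc 1 j) (fun i => ef i y * vf (j-i) x y)]
        refine Finset.sum_congr rfl ?_
        rintro ⟨i, hi⟩ -
        rw [map_mul, eval_epoly]
        simp [vf]
      rw [hs]
      simp
    rw [ef_zero, one_mul, Nat.sub_zero, hv]
    ring

/-- the power series `E(x) := ∑ ef i x · h^i`. -/
def Eser (x : ℚ) : PowerSeries ℚ := PowerSeries.mk (fun i => ef i x)

/-- key multiplicative relation : `E(y) * V(x,y) = E(x)`. -/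
lemma Eser_mul_V (x y : ℚ) :
    Eser y * PowerSeries.mk (fun j => vf j x y) = Eser x := by
  ext j
  rw [PowerSeries.coeff_mul, Eser, Eser, PowerSeries.coeff_mk]
  rw [Finset.Nat.sum_antidiagonal_eq_sum_range_succ_mk]
  simpa using vf_rec j x y

/-- coefficient of `(1+X)^l`. -/
lemma coeff_one_add_X_pow (l j : ℕ) :
    PowerSeries.coeff j ((1 + PowerSeries.X : PowerSeries ℚ) ^ l) = (l.choose j : ℚ) := by
  rw [add_comm (1 : PowerSeries ℚ) PowerSeries.X, add_pow]
  rw [map_sum]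
  have : ∀ k ∈ range (l+1),
      (PowerSeries.coeff j) (PowerSeries.X ^ k * 1 ^ (l - k) * (l.choose k : PowerSeries ℚ))
        = if j = k then (l.choose k : ℚ) else 0 := by
    intro k _
    rw [one_pow, mul_one]
    have : ((l.choose k : ℕ) : PowerSeries ℚ) = PowerSeries.C ((l.choose k : ℕ) : ℚ) := by
      simp
    rw [this, mul_comm, PowerSeries.coeff_C_mul, PowerSeries.coeff_X_pow]
    by_cases h : j = k <;> simp [h]
  rw [Finset.sum_congr rfl this]
  by_cases hj : j ≤ l
  · rw [Finset.sum_ite_eq (range (l+1)) j (fun k => (l.choose k : ℚ))]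
    simp [Nat.lt_succ_of_le hj]
  · push_neg at hj
    rw [Finset.sum_eq_zero, eq_comm]
    · norm_cast
      exact Nat.choose_eq_zero_of_lt hj
    · intro k hk
      rw [mem_range] at hk
      rw [if_neg (by omega)]

lemma cast_descFactorial (l k : ℕ) :
    ((l.descFactorial k : ℕ) : ℚ) = ∏ t ∈ range k, ((l : ℚ) - t) := by
  by_cases h : k ≤ l
  · rw [Nat.descFactorial_eq_prod_range]
    rw [Nat.cast_prod]
    refine Finset.prod_congr rfl ?_
    intro t ht
    rw [mem_range] at ht
    rw [Nat.cast_sub (by omega)]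
  · push_neg at h
    rw [Nat.descFactorial_eq_zero_iff_lt.mpr h, Nat.cast_zero, eq_comm]
    refine Finset.prod_eq_zero (Finset.mem_range.mpr h) ?_
    simp

/-- key arithmetic : `l * ef j l = choose l (j+1)` for `l ≥ 1` (in fact all `l`). -/
lemma mul_ef_eq_choose (l j : ℕ) :
    (l : ℚ) * ef j (l : ℚ) = (l.choose (j+1) : ℚ) := by
  have hd : ((l.descFactorial (j+1) : ℕ) : ℚ) = (l : ℚ) * ∏ t ∈ range j, ((l:ℚ) - (t+1)) := by
    rw [cast_descFactorial, Finset.prod_range_succ']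
    simp only [Nat.cast_zero, sub_zero]
    rw [mul_comm]
    congr 1
    refine Finset.prod_congr rfl fun t _ => ?_
    push_cast; ring
  have hfac : ((j+1).factorial : ℚ) ≠ 0 := by
    exact_mod_cast Nat.factorial_ne_zero (j+1)
  have hdesc := Nat.descFactorial_eq_factorial_mul_choose l (j+1)
  rw [ef]
  field_simp
  rw [mul_comm ((l:ℚ)) _, mul_comm]
  rw [← hd, hdesc]
  push_cast
  ring

/-- the factorization `(1+X)^l - 1 = C l * X * E(l)`. -/
lemma factor_eq (l : ℕ) :
    (1 + PowerSeries.X : PowerSeries ℚ) ^ l - 1 =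
      PowerSeries.C (l : ℚ) * (PowerSeries.X * Eser (l : ℚ)) := by
  ext j
  rw [map_sub, coeff_one_add_X_pow, PowerSeries.coeff_C_mul]
  cases j with
  | zero =>
      rw [PowerSeries.coeff_zero_X_mul]
      simp
  | succ j =>
      rw [PowerSeries.coeff_succ_X_mul, PowerSeries.coeff_one, if_neg (Nat.succ_ne_zero j)]
      rw [Eser, PowerSeries.coeff_mk, sub_zero, mul_ef_eq_choose l j]

/-- Faulhaber polynomial in the variable `X 1` : evaluates to `∑_{k=1}^{n} k^b`. -/
def faul (b : ℕ) : R2 :=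
  (∑ i ∈ range (b+1),
      MvPolynomial.C (bernoulli i * ((b+1).choose i : ℚ) / (b+1)) *
        (MvPolynomial.X 1 + 1) ^ (b+1-i)) - MvPolynomial.C ((0:ℚ)^b)

lemma eval_faul (b : ℕ) (u : ℚ) (n : ℕ) :
    MvPolynomial.eval ![u, (n:ℚ)] (faul b) = ∑ k ∈ Icc 1 n, (k:ℚ)^b := by
  have hF := sum_range_pow (n+1) b
  have hsplit := sum_range_split (fun k : ℕ => (k:ℚ)^b) n
  rw [faul, map_sub, map_sum]
  have : ∀ i ∈ range (b+1),
      MvPolynomial.eval ![u, (n:ℚ)]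
        (MvPolynomial.C (bernoulli i * ((b+1).choose i : ℚ) / (b+1)) *
          (MvPolynomial.X 1 + 1) ^ (b+1-i))
      = bernoulli i * ((b+1).choose i : ℚ) * ((n:ℚ)+1) ^ (b+1-i) / (b+1) := by
    intro i _
    rw [map_mul, MvPolynomial.eval_C, map_pow, map_add, MvPolynomial.eval_X, map_one]
    simp only [Matrix.cons_val_one, Matrix.head_cons, Matrix.cons_val_zero]
    ring
  rw [Finset.sum_congr rfl this, MvPolynomial.eval_C]
  have hcast : ((n+1 : ℕ) : ℚ) = (n:ℚ) + 1 := by push_cast; ring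
  rw [hcast] at hF
  rw [← hF, hsplit]
  simp

lemma faul_totalDegree (b : ℕ) : (faul b).totalDegree ≤ b + 1 := by
  refine le_trans (MvPolynomial.totalDegree_sub _ _) (max_le ?_ ?_)
  · refine MvPolynomial.totalDegree_finsetSum_le ?_
    intro i _
    refine le_trans (MvPolynomial.totalDegree_mul _ _) ?_
    rw [MvPolynomial.totalDegree_C, zero_add]
    refine le_trans (MvPolynomial.totalDegree_pow _ _) ?_
    have : (MvPolynomial.X 1 + 1 : R2).totalDegree ≤ 1 := by
      refine le_trans (MvPolynomial.totalDegree_add _ _) (max_le ?_ ?_)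
      · exact le_of_eq (MvPolynomial.totalDegree_X _)
      · rw [MvPolynomial.totalDegree_one]; omega
    calc (b+1-i) * (MvPolynomial.X 1 + 1 : R2).totalDegree ≤ (b+1-i) * 1 :=
          Nat.mul_le_mul_left _ this
      _ ≤ b + 1 := by omega
  · rw [MvPolynomial.totalDegree_C]; omega

lemma finsupp_sum_eq (d : Fin 2 →₀ ℕ) : d.sum (fun _ e => e) = d 0 + d 1 := by
  rw [Finsupp.sum_fintype]
  · exact Fin.sum_univ_two _
  · intro i; rfl

/-- summation operator : `(sumop p)(u, n) = ∑_{k=1}^n p(u, k)`. -/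
def sumop (p : R2) : R2 :=
  ∑ d ∈ p.support, MvPolynomial.C (MvPolynomial.coeff d p) * (MvPolynomial.X 0) ^ (d 0) * faul (d 1)

lemma eval_sumop (p : R2) (u : ℚ) (n : ℕ) :
    MvPolynomial.eval ![u, (n:ℚ)] (sumop p) = ∑ k ∈ Icc 1 n, MvPolynomial.eval ![u, (k:ℚ)] p := by
  rw [sumop, map_sum]
  have h1 : ∀ d ∈ p.support,
      MvPolynomial.eval ![u, (n:ℚ)]
        (MvPolynomial.C (MvPolynomial.coeff d p) * (MvPolynomial.X 0) ^ (d 0) * faul (d 1))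
      = ∑ k ∈ Icc 1 n, MvPolynomial.coeff d p * u ^ (d 0) * (k:ℚ) ^ (d 1) := by
    intro d _
    rw [map_mul, map_mul, MvPolynomial.eval_C, map_pow, MvPolynomial.eval_X, eval_faul]
    simp only [Matrix.cons_val_zero]
    rw [Finset.mul_sum]
  rw [Finset.sum_congr rfl h1, Finset.sum_comm]
  refine Finset.sum_congr rfl fun k _ => ?_
  rw [MvPolynomial.eval_eq' ![u, (k:ℚ)] p]
  refine Finset.sum_congr rfl fun d _ => ?_
  rw [Fin.prod_univ_two]
  simp only [Matrix.cons_val_zero, Matrix.cons_val_one, Matrix.head_cons]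
  ring

lemma sumop_totalDegree (p : R2) : (sumop p).totalDegree ≤ p.totalDegree + 1 := by
  refine MvPolynomial.totalDegree_finsetSum_le ?_
  intro d hd
  refine le_trans (MvPolynomial.totalDegree_mul _ _) ?_
  have h0 : (MvPolynomial.C (MvPolynomial.coeff d p) * (MvPolynomial.X 0 : R2) ^ (d 0)).totalDegree
      ≤ d 0 := by
    refine le_trans (MvPolynomial.totalDegree_mul _ _) ?_
    rw [MvPolynomial.totalDegree_C, zero_add]
    refine le_trans (MvPolynomial.totalDegree_pow _ _) ?_
    rw [MvPolynomial.totalDegree_X]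
    omega
  have h1 := faul_totalDegree (d 1)
  have hle := MvPolynomial.le_totalDegree hd
  rw [finsupp_sum_eq] at hle
  omega

lemma eval_bind1 (g : Fin 2 → R2) (x : Fin 2 → ℚ) (p : R2) :
    MvPolynomial.eval x (MvPolynomial.bind₁ g p)
      = MvPolynomial.eval (fun i => MvPolynomial.eval x (g i)) p := by
  show MvPolynomial.eval₂Hom (RingHom.id ℚ) x (MvPolynomial.bind₁ g p) = _
  rw [MvPolynomial.eval₂Hom_bind₁]
  rfl

lemma totalDegree_bind1_le (g : Fin 2 → R2) (hg : ∀ i, (g i).totalDegree ≤ 1) (p : R2) :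
    (MvPolynomial.bind₁ g p).totalDegree ≤ p.totalDegree := by
  rw [MvPolynomial.bind₁, MvPolynomial.aeval_def, MvPolynomial.algebraMap_eq,
    MvPolynomial.eval₂_eq]
  refine MvPolynomial.totalDegree_finsetSum_le ?_
  intro d hd
  refine le_trans (MvPolynomial.totalDegree_mul _ _) ?_
  rw [MvPolynomial.totalDegree_C, zero_add]
  refine le_trans (MvPolynomial.totalDegree_finset_prod _ _) ?_
  have hle := MvPolynomial.le_totalDegree hd
  calc ∑ i ∈ d.support, ((g i) ^ (d i)).totalDegree
      ≤ ∑ i ∈ d.support, d i := by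
        refine Finset.sum_le_sum fun i _ => ?_
        refine le_trans (MvPolynomial.totalDegree_pow _ _) ?_
        calc d i * (g i).totalDegree ≤ d i * 1 := Nat.mul_le_mul_left _ (hg i)
          _ = d i := Nat.mul_one _
    _ ≤ p.totalDegree := hle

def subUV (p : R2) : R2 :=
  MvPolynomial.bind₁ ![MvPolynomial.X 0 + MvPolynomial.X 1, MvPolynomial.X 1] p

def subUV' (p : R2) : R2 :=
  MvPolynomial.bind₁ ![MvPolynomial.X 0 + MvPolynomial.X 1 - 1, MvPolynomial.X 1 - 1] p

def subXY (p : R2) : R2 :=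
  MvPolynomial.bind₁ ![MvPolynomial.X 0 - MvPolynomial.X 1, MvPolynomial.X 1] p

lemma eval_subUV (p : R2) (x y : ℚ) :
    MvPolynomial.eval ![x, y] (subUV p) = MvPolynomial.eval ![x + y, y] p := by
  rw [subUV, eval_bind1]
  have h : (fun i => MvPolynomial.eval ![x, y] (![MvPolynomial.X 0 + MvPolynomial.X 1, MvPolynomial.X 1] i)) = ![x + y, y] := by
    funext i
    fin_cases i <;> simp
  rw [h]

lemma eval_subUV' (p : R2) (x y : ℚ) :
    MvPolynomial.eval ![x, y] (subUV' p) = MvPolynomial.eval ![x + y - 1, y - 1] p := by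
  rw [subUV', eval_bind1]
  have h : (fun i => MvPolynomial.eval ![x, y] (![MvPolynomial.X 0 + MvPolynomial.X 1 - 1, MvPolynomial.X 1 - 1] i)) = ![x + y - 1, y - 1] := by
    funext i
    fin_cases i <;> simp
  rw [h]

lemma eval_subXY (p : R2) (x y : ℚ) :
    MvPolynomial.eval ![x, y] (subXY p) = MvPolynomial.eval ![x - y, y] p := by
  rw [subXY, eval_bind1]
  have h : (fun i => MvPolynomial.eval ![x, y] (![MvPolynomial.X 0 - MvPolynomial.X 1, MvPolynomial.X 1] i)) = ![x - y, y] := by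
    funext i
    fin_cases i <;> simp
  rw [h]

lemma deg_X_add_X : (MvPolynomial.X 0 + MvPolynomial.X 1 : R2).totalDegree ≤ 1 := by
  refine le_trans (MvPolynomial.totalDegree_add _ _) (max_le ?_ ?_) <;>
    exact le_of_eq (MvPolynomial.totalDegree_X _)

lemma subUV_totalDegree (p : R2) : (subUV p).totalDegree ≤ p.totalDegree := by
  refine totalDegree_bind1_le _ ?_ _
  intro i
  fin_cases i
  · exact deg_X_add_X
  · exact le_of_eq (MvPolynomial.totalDegree_X _)

lemma subUV'_totalDegree (p : R2) : (subUV' p).totalDegree ≤ p.totalDegree := by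
  refine totalDegree_bind1_le _ ?_ _
  intro i
  fin_cases i
  · refine le_trans (MvPolynomial.totalDegree_sub _ _) (max_le deg_X_add_X ?_)
    rw [MvPolynomial.totalDegree_one]; omega
  · refine le_trans (MvPolynomial.totalDegree_sub _ _) (max_le ?_ ?_)
    · exact le_of_eq (MvPolynomial.totalDegree_X _)
    · rw [MvPolynomial.totalDegree_one]; omega

lemma subXY_totalDegree (p : R2) : (subXY p).totalDegree ≤ p.totalDegree := by
  refine totalDegree_bind1_le _ ?_ _
  intro i
  fin_cases i
  · refine le_trans (MvPolynomial.totalDegree_sub _ _) (max_le ?_ ?_) <;>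
      exact le_of_eq (MvPolynomial.totalDegree_X _)
  · exact le_of_eq (MvPolynomial.totalDegree_X _)

/-- The polynomials `T_j`. -/
def Tfun (j : ℕ) : R2 :=
  if j = 0 then 1
  else subXY (sumop (∑ i ∈ (Finset.Icc 1 j).attach,
    subUV (vpoly i.1) * subUV' (Tfun (j - i.1))))
termination_by j
decreasing_by
  have hi := Finset.mem_Icc.mp i.2
  omega

def tf (j : ℕ) (x y : ℚ) : ℚ := MvPolynomial.eval ![x, y] (Tfun j)

lemma tf_zero (x y : ℚ) : tf 0 x y = 1 := by rw [tf, Tfun]; simp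

lemma Tfun_totalDegree (j : ℕ) : (Tfun j).totalDegree ≤ 2 * j := by
  induction j using Nat.strong_induction_on with
  | _ j ih =>
    rw [Tfun]
    by_cases hj : j = 0
    · simp [hj, MvPolynomial.totalDegree_one]
    · simp only [hj, if_false]
      refine le_trans (subXY_totalDegree _) (le_trans (sumop_totalDegree _) ?_)
      have hΦ : (∑ i ∈ (Finset.Icc 1 j).attach,
          subUV (vpoly i.1) * subUV' (Tfun (j - i.1))).totalDegree ≤ 2*j - 1 := by
        refine MvPolynomial.totalDegree_finsetSum_le ?_
        rintro ⟨i, hi⟩ -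
        dsimp only
        have hi' := Finset.mem_Icc.mp hi
        refine le_trans (MvPolynomial.totalDegree_mul _ _) ?_
        have h1 := le_trans (subUV_totalDegree (vpoly i)) (vpoly_totalDegree i)
        have h2 := le_trans (subUV'_totalDegree (Tfun (j - i))) (ih (j - i) (by omega))
        omega
      omega

lemma tf_rec (j : ℕ) (hj : j ≠ 0) (x : ℚ) (n : ℕ) :
    tf j x (n : ℚ) = ∑ k ∈ Icc 1 n, ∑ i ∈ Icc 1 j,
      vf i (x - n + k) (k : ℚ) * tf (j - i) (x - n + k - 1) ((k:ℚ) - 1) := by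
  rw [tf, Tfun]
  simp only [hj, if_false]
  rw [eval_subXY, eval_sumop]
  refine Finset.sum_congr rfl fun k _ => ?_
  rw [map_sum, ← Finset.sum_attach (Icc 1 j)
    (fun i => vf i (x - n + k) (k:ℚ) * tf (j - i) (x - n + k - 1) ((k:ℚ) - 1))]
  refine Finset.sum_congr rfl ?_
  rintro ⟨i, hi⟩ -
  rw [map_mul]
  dsimp only
  congr 1
  · rw [eval_subUV]
    rfl
  · rw [eval_subUV']
    rfl

lemma main_W (n m : ℕ) (hm : n ≤ m) :
    (∏ k ∈ Icc 1 n, PowerSeries.mk (fun j => vf j ((m:ℚ) - (n:ℚ) + (k:ℚ)) (k:ℚ)))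
      = PowerSeries.mk (fun j => if j = 0 then (1:ℚ) else tf j (m:ℚ) (n:ℚ)) := by
  induction n generalizing m with
  | zero =>
      rw [show (Icc 1 0 : Finset ℕ) = ∅ from Finset.Icc_eq_empty (by omega), Finset.prod_empty]
      ext j
      rw [PowerSeries.coeff_one, PowerSeries.coeff_mk]
      by_cases hj : j = 0
      · simp [hj]
      · rw [if_neg hj, if_neg hj, tf_rec j hj,
          show (Icc 1 0 : Finset ℕ) = ∅ from Finset.Icc_eq_empty (by omega), Finset.sum_empty]
  | succ n ih =>
      have hm1 : (1:ℕ) ≤ m := by omega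
      have hcast : ((m - 1 : ℕ) : ℚ) = (m:ℚ) - 1 := by
        rw [Nat.cast_sub hm1, Nat.cast_one]
      rw [Finset.prod_Icc_succ_top (by omega : 1 ≤ n + 1)]
      have hfun : ∀ k ∈ Icc 1 n,
          PowerSeries.mk (fun j => vf j ((m:ℚ) - ((n+1:ℕ):ℚ) + (k:ℚ)) (k:ℚ))
            = PowerSeries.mk (fun j => vf j (((m-1:ℕ):ℚ) - (n:ℚ) + (k:ℚ)) (k:ℚ)) := by
        intro k _
        have harg : (m:ℚ) - ((n+1:ℕ):ℚ) + (k:ℚ) = ((m-1:ℕ):ℚ) - (n:ℚ) + (k:ℚ) := by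
          rw [hcast]; push_cast; ring
        rw [harg]
      rw [Finset.prod_congr rfl hfun, ih (m-1) (by omega)]
      have harg2 : (m:ℚ) - ((n+1:ℕ):ℚ) + ((n+1:ℕ):ℚ) = (m:ℚ) := by ring
      rw [harg2, mul_comm]
      ext j
      rw [PowerSeries.coeff_mul, Finset.Nat.sum_antidiagonal_eq_sum_range_succ_mk]
      simp only [PowerSeries.coeff_mk]
      by_cases hj : j = 0
      · subst hj
        simp [vf_zero]
      · rw [if_neg hj, sum_range_split]
        -- the first term
        have hterm0 : vf 0 (m:ℚ) ((n+1:ℕ):ℚ) *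
            (if j - 0 = 0 then (1:ℚ) else tf (j-0) ((m-1:ℕ):ℚ) (n:ℚ))
            = tf j ((m-1:ℕ):ℚ) (n:ℚ) := by
          rw [vf_zero, one_mul, Nat.sub_zero, if_neg hj]
        rw [hterm0]
        -- the remaining terms
        have hterms : ∀ i ∈ Icc 1 j,
            vf i (m:ℚ) ((n+1:ℕ):ℚ) *
              (if j - i = 0 then (1:ℚ) else tf (j-i) ((m-1:ℕ):ℚ) (n:ℚ))
            = vf i (m:ℚ) ((n+1:ℕ):ℚ) * tf (j-i) ((m-1:ℕ):ℚ) (n:ℚ) := by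
          intro i _
          by_cases h : j - i = 0
          · rw [h, if_pos rfl, tf_zero]
          · rw [if_neg h]
        rw [Finset.sum_congr rfl hterms]
        -- now the right-hand side
        rw [tf_rec j hj (m:ℚ) (n+1), Finset.sum_Icc_succ_top (by omega : 1 ≤ n + 1)]
        have hsum1 : ∑ k ∈ Icc 1 n, ∑ i ∈ Icc 1 j,
            vf i ((m:ℚ) - ((n+1:ℕ):ℚ) + (k:ℚ)) (k:ℚ) *
              tf (j-i) ((m:ℚ) - ((n+1:ℕ):ℚ) + (k:ℚ) - 1) ((k:ℚ) - 1)
            = tf j ((m-1:ℕ):ℚ) (n:ℚ) := by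
          rw [tf_rec j hj ((m-1:ℕ):ℚ) n]
          refine Finset.sum_congr rfl fun k _ => ?_
          refine Finset.sum_congr rfl fun i _ => ?_
          have h1 : (m:ℚ) - ((n+1:ℕ):ℚ) + (k:ℚ) = ((m-1:ℕ):ℚ) - (n:ℚ) + (k:ℚ) := by
            rw [hcast]; push_cast; ring
          rw [h1]
        rw [hsum1]
        have hsum2 : ∑ i ∈ Icc 1 j,
            vf i ((m:ℚ) - ((n+1:ℕ):ℚ) + ((n+1:ℕ):ℚ)) ((n+1:ℕ):ℚ) *
              tf (j-i) ((m:ℚ) - ((n+1:ℕ):ℚ) + ((n+1:ℕ):ℚ) - 1) (((n+1:ℕ):ℚ) - 1)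
            = ∑ i ∈ Icc 1 j,
            vf i (m:ℚ) ((n+1:ℕ):ℚ) * tf (j-i) ((m-1:ℕ):ℚ) (n:ℚ) := by
          refine Finset.sum_congr rfl fun i _ => ?_
          have h1 : (m:ℚ) - ((n+1:ℕ):ℚ) + ((n+1:ℕ):ℚ) = (m:ℚ) := by ring
          have h3 : ((n+1:ℕ):ℚ) - 1 = (n:ℚ) := by push_cast; ring
          rw [h1, ← hcast, h3]
        rw [hsum2]

lemma prod_Icc_id_fact (a : ℕ) : (∏ l ∈ Icc 1 a, l) = a.factorial := by
  rw [← Finset.Ico_add_one_right_eq_Icc]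
  exact Finset.prod_Ico_id_eq_factorial a

lemma prod_Icc_eq_choose (n m : ℕ) (h : n ≤ m) :
    (∏ l ∈ Icc (m-n+1) m, l) = m.choose n * n.factorial := by
  have e1 : Icc (m-n+1) m = Ioc (m-n) m := by
    ext x; simp only [Finset.mem_Icc, Finset.mem_Ioc]; omega
  have e2 : Icc 1 (m-n) = Ioc 0 (m-n) := by
    ext x; simp only [Finset.mem_Icc, Finset.mem_Ioc]; omega
  have e3 : Icc 1 m = Ioc 0 m := by
    ext x; simp only [Finset.mem_Icc, Finset.mem_Ioc]; omega
  have h1 := Finset.prod_Ioc_consecutive (fun l : ℕ => l) (Nat.zero_le (m-n)) (Nat.sub_le m n)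
  have h2 : (m-n).factorial * (∏ l ∈ Icc (m-n+1) m, l) = m.factorial := by
    rw [e1, ← prod_Icc_id_fact (m-n), ← prod_Icc_id_fact m, e2, e3, h1]
  have h3 := Nat.choose_mul_factorial_mul_factorial h
  refine Nat.eq_of_mul_eq_mul_left (Nat.factorial_pos (m-n)) ?_
  rw [h2, ← h3]
  ring

theorem final :
    ∃ T : ℕ → MvPolynomial (Fin 2) ℚ,
      (∀ j : ℕ, 1 ≤ j → (T j).totalDegree ≤ 2 * j) ∧
      ∀ m n : ℕ, n ≤ m →
        (∏ l ∈ Finset.Icc (m - n + 1) m,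
            ((1 + PowerSeries.X : PowerSeries ℚ) ^ l - 1)) =
          (∏ l ∈ Finset.Icc 1 n, ((1 + PowerSeries.X : PowerSeries ℚ) ^ l - 1)) *
            PowerSeries.mk (fun j =>
              if j = 0 then (m.choose n : ℚ)
              else (m.choose n : ℚ) * MvPolynomial.eval ![(m : ℚ), (n : ℚ)] (T j)) := by
  refine ⟨Tfun, fun j _ => Tfun_totalDegree j, ?_⟩
  intro m n hnm
  -- reindex the left product
  have hmap : Icc (m-n+1) m = (Icc 1 n).map (addLeftEmbedding (m-n)) := by
    rw [Finset.map_add_left_Icc]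
    congr 1 <;> omega
  rw [hmap, Finset.prod_map]
  -- rewrite each factor
  have hfac : ∀ k ∈ Icc 1 n,
      ((1 + PowerSeries.X : PowerSeries ℚ) ^ (addLeftEmbedding (m-n) k) - 1) =
        PowerSeries.C (((m-n+k : ℕ) : ℚ)) *
          (PowerSeries.X * (Eser (k:ℚ) *
            PowerSeries.mk (fun j => vf j ((m:ℚ) - (n:ℚ) + (k:ℚ)) (k:ℚ)))) := by
    intro k hk
    have he : addLeftEmbedding (m-n) k = m - n + k := by
      simp [addLeftEmbedding]
    rw [he, factor_eq (m-n+k)]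
    have hc : ((m-n+k : ℕ) : ℚ) = (m:ℚ) - (n:ℚ) + (k:ℚ) := by
      push_cast [Nat.cast_sub hnm]
      ring
    rw [hc, ← Eser_mul_V ((m:ℚ) - (n:ℚ) + (k:ℚ)) (k:ℚ), ← hc]
  rw [Finset.prod_congr rfl hfac]
  have hfac2 : ∀ l ∈ Icc 1 n,
      ((1 + PowerSeries.X : PowerSeries ℚ) ^ l - 1) =
        PowerSeries.C ((l : ℚ)) * (PowerSeries.X * Eser (l:ℚ)) := by
    intro l _
    exact factor_eq l
  rw [Finset.prod_congr rfl hfac2]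
  -- split off scalars and powers of X
  rw [Finset.prod_mul_distrib, Finset.prod_mul_distrib, Finset.prod_mul_distrib,
    Finset.prod_mul_distrib]
  rw [main_W n m hnm]
  -- scalars
  have hs1 : (∏ k ∈ Icc 1 n, PowerSeries.C (((m-n+k : ℕ) : ℚ)))
      = PowerSeries.C ((m.choose n : ℚ) * (n.factorial : ℚ)) := by
    rw [← map_prod]
    congr 1
    rw [← Nat.cast_prod]
    rw [show (∏ k ∈ Icc 1 n, (m-n+k)) = ∏ l ∈ Icc (m-n+1) m, l from by
      rw [hmap, Finset.prod_map]
      refine Finset.prod_congr rfl fun k _ => ?_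
      simp [addLeftEmbedding]]
    rw [prod_Icc_eq_choose n m hnm]
    push_cast
    ring
  have hs2 : (∏ l ∈ Icc 1 n, PowerSeries.C ((l : ℚ)))
      = PowerSeries.C ((n.factorial : ℚ)) := by
    rw [← map_prod]
    congr 1
    rw [← Nat.cast_prod, prod_Icc_id_fact n]
  rw [hs1, hs2]
  -- the goal series
  have hS : PowerSeries.mk (fun j =>
        if j = 0 then (m.choose n : ℚ)
        else (m.choose n : ℚ) * MvPolynomial.eval ![(m : ℚ), (n : ℚ)] (Tfun j))
      = PowerSeries.C (m.choose n : ℚ) *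
          PowerSeries.mk (fun j => if j = 0 then (1:ℚ) else tf j (m:ℚ) (n:ℚ)) := by
    ext j
    rw [PowerSeries.coeff_C_mul, PowerSeries.coeff_mk, PowerSeries.coeff_mk]
    by_cases hj : j = 0
    · simp [hj]
    · rw [if_neg hj, if_neg hj, tf]
  rw [hS, map_mul, Finset.prod_mul_distrib]
  ring

end Stmt7

end Stmt7Aux

/-- Lemma A.1: there are polynomials `T_j ∈ ℚ[X,Y]` (`j ≥ 1`) of total degree at most `2j`
such that, in `ℚ[[h]]`, for all `n ≤ m`,
`∏_{l=m-n+1}^{m} ((1+h)^l - 1) = (∏_{l=1}^{n} ((1+h)^l - 1)) · G_{m,n}`, where `G_{m,n}` is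
the power series with constant coefficient `binom(m,n)` and coefficient of `h^j` equal to
`binom(m,n) · T_j(m,n)` for `j ≥ 1`. -/
theorem stmt_7 :
    ∃ T : ℕ → MvPolynomial (Fin 2) ℚ,
      (∀ j : ℕ, 1 ≤ j → (T j).totalDegree ≤ 2 * j) ∧
      ∀ m n : ℕ, n ≤ m →
        (∏ l ∈ Finset.Icc (m - n + 1) m,
            ((1 + PowerSeries.X : PowerSeries ℚ) ^ l - 1)) =
          (∏ l ∈ Finset.Icc 1 n, ((1 + PowerSeries.X : PowerSeries ℚ) ^ l - 1)) *
            PowerSeries.mk (fun j =>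
              if j = 0 then (m.choose n : ℚ)
              else (m.choose n : ℚ) * MvPolynomial.eval ![(m : ℚ), (n : ℚ)] (T j)) := by
  exact Stmt7.final
end

section
/- For natural numbers j and m_1 ≤ m_2 define Σ_j(m_1, m_2) := ∑_{A} ∏_{l ∈ A} ((1+h)^{−l} − 1) ∈ ℚ[[h]], where the sum ranges over all j-element subsets A of {m_1+1, …, m_2}. Then the coefficient of h^p in Σ_j(m_1, m_2) vanishes for p < j, and there exists a family of polynomials T_{j,k} ∈ ℚ[X, Y], for j, k ≥ 0, with total degree deg T_{j,k} ≤ j + k, such that for all j, k and all natural numbers m_1 ≤ m_2 the coefficient of h^{j+k} in Σ_j(m_1, m_2) equals (∏_{i=0}^{j−1} (m_2 − m_1 − i)) · T_{j,k}(m_1, m_2). -/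
open PowerSeries hiding C coeff constantCoeff
open MvPolynomial Finset

namespace Stmt9Aux

noncomputable section


def g : PowerSeries ℚ := (1 + PowerSeries.X : PowerSeries ℚ)⁻¹

lemma one_add_X_mul_g : (1 + PowerSeries.X : PowerSeries ℚ) * g = 1 :=
  PowerSeries.mul_inv_cancel _ (by simp)

lemma constCoeff_g : PowerSeries.constantCoeff (R := ℚ) g = 1 := by
  rw [g, PowerSeries.constantCoeff_inv]; simp

/-- `a n l` is the `n`-th coefficient of `(1+X)^{-l}`. -/
def a (n l : ℕ) : ℚ := PowerSeries.coeff (R := ℚ) n (g ^ l)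

lemma g_pow_succ_recur (l : ℕ) : g ^ (l + 1) * (1 + PowerSeries.X) = g ^ l := by
  have := one_add_X_mul_g
  calc g ^ (l+1) * (1 + PowerSeries.X) = g ^ l * ((1 + PowerSeries.X) * g) := by ring
  _ = g ^ l := by rw [this, mul_one]

lemma a_recur (n l : ℕ) : a (n+1) (l+1) + a n (l+1) = a (n+1) l := by
  have h := congrArg (PowerSeries.coeff (R := ℚ) (n+1)) (g_pow_succ_recur l)
  rw [mul_add, mul_one, map_add, PowerSeries.coeff_succ_mul_X] at h
  exact h

lemma a_zero_l (l : ℕ) : a 0 l = 1 := by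
  rw [a, PowerSeries.coeff_zero_eq_constantCoeff, map_pow, constCoeff_g, one_pow]

lemma a_closed (n l : ℕ) : a n l = (-1)^n * ((l + n - 1).choose n : ℚ) := by
  induction l generalizing n with
  | zero =>
    cases n with
    | zero => simp [a_zero_l]
    | succ n =>
      have h1 : a (n+1) 0 = 0 := by
        simp [a, PowerSeries.coeff_one]
      rw [h1]
      have : (0 + (n+1) - 1).choose (n+1) = 0 :=
        Nat.choose_eq_zero_of_lt (by omega)
      rw [this]; simp
  | succ l ih =>
    induction n with
    | zero => simp [a_zero_l]
    | succ n ihn =>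
      have h := a_recur n l
      have h2 : a (n+1) (l+1) = a (n+1) l - a n (l+1) := by linarith
      rw [h2, ih (n+1), ihn]
      have e1 : l + (n+1) - 1 = l + n := by omega
      have e2 : l + 1 + n - 1 = l + n := by omega
      have e3 : l + 1 + (n+1) - 1 = l + n + 1 := by omega
      rw [e1, e2, e3, Nat.choose_succ_succ (l + n) n]
      push_cast
      ring



/-- polynomial representing `l ↦ (-1)^n C(l+n-1, n)` -/
def ap (n : ℕ) : MvPolynomial (Fin 2) ℚ :=
  C ((-1)^n / (n.factorial : ℚ)) * ∏ i ∈ range n, (MvPolynomial.X 0 + C (i:ℚ))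

lemma ap_totalDegree (n : ℕ) : (ap n).totalDegree ≤ n := by
  refine (totalDegree_mul _ _).trans ?_
  rw [totalDegree_C, zero_add]
  refine (totalDegree_finset_prod _ _).trans ?_
  have h1 : ∀ i ∈ range n, (MvPolynomial.X (0:Fin 2) + C (i:ℚ) :
      MvPolynomial (Fin 2) ℚ).totalDegree ≤ 1 := by
    intro i _
    refine (totalDegree_add _ _).trans (max_le ?_ ?_)
    · exact le_of_eq (totalDegree_X _)
    · rw [totalDegree_C]; omega
  calc ∑ i ∈ range n, (MvPolynomial.X (0:Fin 2) + C (i:ℚ) :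
        MvPolynomial (Fin 2) ℚ).totalDegree
      ≤ ∑ _i ∈ range n, 1 := Finset.sum_le_sum h1
    _ = n := by simp

lemma cast_ascFactorial (l n : ℕ) :
    ((l.ascFactorial n : ℕ) : ℚ) = ∏ i ∈ range n, ((l:ℚ) + i) := by
  induction n with
  | zero => simp
  | succ n ih =>
    rw [Nat.ascFactorial_succ, prod_range_succ, ← ih]
    push_cast; ring

lemma eval_ap (n l : ℕ) (v : Fin 2 → ℚ) (hv : v 0 = l) :
    eval v (ap n) = (-1)^n * ((l + n - 1).choose n : ℚ) := by
  rw [ap, eval_mul, eval_C, eval_prod]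
  simp only [eval_add, eval_X, eval_C, hv]
  rw [← cast_ascFactorial, Nat.ascFactorial_eq_factorial_mul_choose']
  have : ((n.factorial : ℚ)) ≠ 0 := by exact_mod_cast Nat.factorial_ne_zero n
  push_cast
  field_simp



/-- polynomial whose evaluation at `v` with `v i = n` is `∑_{k < n} k^a`. -/
def SP (a : ℕ) (i : Fin 2) : MvPolynomial (Fin 2) ℚ :=
  ∑ t ∈ range (a+1),
    C ((bernoulli t * ((a+1).choose t)) / (a+1)) * MvPolynomial.X i ^ (a+1-t)

lemma SP_deg (a : ℕ) (i : Fin 2) : (SP a i).totalDegree ≤ a + 1 := by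
  refine totalDegree_finsetSum_le fun t _ => ?_
  refine (totalDegree_mul _ _).trans ?_
  rw [totalDegree_C, zero_add]
  exact (totalDegree_pow _ _).trans (by simp [totalDegree_X]; try omega)

lemma eval_SP (a : ℕ) (i : Fin 2) (n : ℕ) (v : Fin 2 → ℚ) (hv : v i = n) :
    eval v (SP a i) = ∑ k ∈ range n, (k:ℚ)^a := by
  rw [sum_range_pow, SP, map_sum]
  refine Finset.sum_congr rfl fun t _ => ?_
  rw [eval_mul, eval_C, eval_pow, eval_X, hv]
  ring

/-- evaluation at `v i = n` gives `∑_{k ≤ n} k^a`. -/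
def SP1 (a : ℕ) (i : Fin 2) : MvPolynomial (Fin 2) ℚ := SP a i + MvPolynomial.X i ^ a

lemma SP1_deg (a : ℕ) (i : Fin 2) : (SP1 a i).totalDegree ≤ a + 1 := by
  refine (totalDegree_add _ _).trans (max_le (SP_deg a i) ?_)
  exact (totalDegree_pow _ _).trans (by simp [totalDegree_X]; try omega)

lemma eval_SP1 (a : ℕ) (i : Fin 2) (n : ℕ) (v : Fin 2 → ℚ) (hv : v i = n) :
    eval v (SP1 a i) = ∑ k ∈ range (n+1), (k:ℚ)^a := by
  rw [SP1, eval_add, eval_SP a i n v hv, eval_pow, eval_X, hv, sum_range_succ]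

lemma sum_Icc_pow (x y : ℕ) (hxy : x ≤ y) (a : ℕ) :
    ∑ l ∈ Icc (x+1) y, ((l:ℚ))^a =
      (∑ k ∈ range (y+1), (k:ℚ)^a) - ∑ k ∈ range (x+1), (k:ℚ)^a := by
  have h : (∑ k ∈ Ico 0 (x+1), ((k:ℚ))^a) + ∑ k ∈ Ico (x+1) (y+1), ((k:ℚ))^a
      = ∑ k ∈ Ico 0 (y+1), ((k:ℚ))^a :=
    Finset.sum_Ico_consecutive _ (by omega) (by omega)
  rw [← Finset.Ico_add_one_right_eq_Icc]; simp only [Finset.range_eq_Ico, Nat.succ_eq_add_one]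
  linarith [h]

lemma key_mono (m : Fin 2 →₀ ℕ) (c : ℚ) :
    ∃ Q : MvPolynomial (Fin 2) ℚ, Q.totalDegree ≤ m 0 + m 1 + 1 ∧
      ∀ x y : ℕ, x ≤ y →
        eval ![(x:ℚ), (y:ℚ)] Q =
          ∑ l ∈ Icc (x+1) y, eval ![(l:ℚ), (y:ℚ)] (monomial m c) := by
  refine ⟨C c * MvPolynomial.X 1 ^ (m 1) * (SP1 (m 0) 1 - SP1 (m 0) 0), ?_, ?_⟩
  · refine (totalDegree_mul _ _).trans ?_
    have h1 : (C c * MvPolynomial.X (1:Fin 2) ^ (m 1) :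
        MvPolynomial (Fin 2) ℚ).totalDegree ≤ m 1 := by
      refine (totalDegree_mul _ _).trans ?_
      rw [totalDegree_C, zero_add]
      exact (totalDegree_pow _ _).trans (by simp [totalDegree_X])
    have h2 := (totalDegree_sub (SP1 (m 0) 1) (SP1 (m 0) 0)).trans
      (max_le (SP1_deg _ _) (SP1_deg _ _))
    omega
  · intro x y hxy
    have e0 : (![(x:ℚ), (y:ℚ)] : Fin 2 → ℚ) 0 = (x:ℚ) := rfl
    have e1 : (![(x:ℚ), (y:ℚ)] : Fin 2 → ℚ) 1 = (y:ℚ) := rfl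
    rw [eval_mul, eval_mul, eval_C, eval_pow, eval_X, e1, eval_sub,
      eval_SP1 (m 0) 1 y _ e1, eval_SP1 (m 0) 0 x _ e0, ← sum_Icc_pow x y hxy (m 0),
      Finset.mul_sum]
    have hr : ∀ l : ℕ, eval ![(l:ℚ), (y:ℚ)] (monomial m c)
        = c * (l:ℚ) ^ (m 0) * (y:ℚ) ^ (m 1) := by
      intro l
      rw [eval_monomial, Finsupp.prod_fintype _ _ (fun i => pow_zero _)]
      rw [Fin.prod_univ_two]
      simp only [Matrix.cons_val_zero, Matrix.cons_val_one, Matrix.head_cons]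
      ring
    exact Finset.sum_congr rfl fun l _ => by rw [hr l]; ring

lemma sump (G : MvPolynomial (Fin 2) ℚ) :
    ∃ Q : MvPolynomial (Fin 2) ℚ, Q.totalDegree ≤ G.totalDegree + 1 ∧
      ∀ x y : ℕ, x ≤ y →
        eval ![(x:ℚ), (y:ℚ)] Q = ∑ l ∈ Icc (x+1) y, eval ![(l:ℚ), (y:ℚ)] G := by
  choose Qm hdeg heval using fun m => key_mono m (MvPolynomial.coeff m G)
  refine ⟨∑ m ∈ G.support, Qm m, ?_, ?_⟩
  · refine totalDegree_finsetSum_le fun m hm => ?_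
    refine (hdeg m).trans ?_
    have : m 0 + m 1 ≤ G.totalDegree := by
      have h2 := le_totalDegree hm
      have : (m.sum fun _ e => e) = m 0 + m 1 := by
        rw [Finsupp.sum_fintype _ _ (fun i => rfl), Fin.sum_univ_two]
      omega
    omega
  · intro x y hxy
    rw [map_sum, Finset.sum_congr rfl fun m _ => heval m x y hxy, Finset.sum_comm]
    refine Finset.sum_congr rfl fun l _ => ?_
    conv_rhs => rw [G.as_sum]
    rw [map_sum]


def Sser (j m1 m2 : ℕ) : PowerSeries ℚ :=
  ∑ A ∈ Finset.powersetCard j (Finset.Icc (m1 + 1) m2),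
    ∏ l ∈ A, (g ^ l - 1)

lemma coeff_S_eq_zero (j m1 m2 p : ℕ) (hp : p < j) :
    PowerSeries.coeff (R := ℚ) p (Sser j m1 m2) = 0 := by
  rw [Sser, map_sum]
  refine Finset.sum_eq_zero fun A hA => ?_
  obtain ⟨-, hcard⟩ := Finset.mem_powersetCard.1 hA
  have hdvd : (PowerSeries.X : PowerSeries ℚ) ^ j ∣ ∏ l ∈ A, (g ^ l - 1) := by
    have : ∀ l ∈ A, (PowerSeries.X : PowerSeries ℚ) ∣ (g ^ l - 1) := by
      intro l _
      rw [PowerSeries.X_dvd_iff, map_sub, map_pow, constCoeff_g, one_pow, map_one, sub_self]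
    calc (PowerSeries.X : PowerSeries ℚ) ^ j = ∏ _l ∈ A, PowerSeries.X := by
          rw [Finset.prod_const, hcard]
    _ ∣ ∏ l ∈ A, (g ^ l - 1) := Finset.prod_dvd_prod_of_dvd _ _ this
  exact PowerSeries.X_pow_dvd_iff.1 hdvd p hp

lemma S_zero (j m1 m2 : ℕ) (h : m2 - m1 < j) : Sser j m1 m2 = 0 := by
  rw [Sser, Finset.powersetCard_eq_empty.2, Finset.sum_empty]
  rw [Nat.card_Icc]
  omega

lemma S_zero' (m1 m2 : ℕ) : Sser 0 m1 m2 = 1 := by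
  rw [Sser, Finset.powersetCard_zero, Finset.sum_singleton, Finset.prod_empty]

lemma S_succ_step (j m1 m2 : ℕ) (h : m1 < m2) :
    Sser (j+1) m1 m2 = Sser (j+1) (m1+1) m2 + (g ^ (m1+1) - 1) * Sser j (m1+1) m2 := by
  have hx : (m1+1) ∉ Finset.Icc (m1+2) m2 := by simp
  have hins : Finset.Icc (m1+1) m2 = insert (m1+1) (Finset.Icc (m1+2) m2) := by
    rw [← Finset.Ioc_insert_left (by omega : m1+1 ≤ m2)]
    congr 1
    ext t; simp; omega
  rw [Sser, hins, Finset.powersetCard_succ_insert hx, Finset.sum_union, Sser, Sser]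
  · congr 1
    rw [Finset.sum_image ?hinj]
    case hinj =>
      intro A hA B hB hAB
      have hxA : (m1+1) ∉ A := fun hmem =>
        hx ((Finset.mem_powersetCard.1 hA).1 hmem)
      have hxB : (m1+1) ∉ B := fun hmem =>
        hx ((Finset.mem_powersetCard.1 hB).1 hmem)
      rw [← Finset.erase_insert hxA, ← Finset.erase_insert hxB, hAB]
    rw [Finset.mul_sum]
    refine Finset.sum_congr rfl fun A hA => ?_
    have hxA : (m1+1) ∉ A := fun hmem =>
      hx ((Finset.mem_powersetCard.1 hA).1 hmem)
    rw [Finset.prod_insert hxA]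
  · rw [Finset.disjoint_left]
    intro A hA hA2
    obtain ⟨B, hB, rfl⟩ := Finset.mem_image.1 hA2
    have hxA : (m1+1) ∈ insert (m1+1) B := Finset.mem_insert_self _ _
    exact hx ((Finset.mem_powersetCard.1 hA).1 hxA)

lemma S_min_formula (j m1 m2 : ℕ) (hm : m1 ≤ m2) :
    Sser (j+1) m1 m2 = ∑ l ∈ Finset.Icc (m1+1) m2, (g ^ l - 1) * Sser j l m2 := by
  suffices h : ∀ d m1, m1 ≤ m2 → m2 - m1 = d →
      Sser (j+1) m1 m2 = ∑ l ∈ Finset.Icc (m1+1) m2, (g ^ l - 1) * Sser j l m2 by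
    exact h (m2 - m1) m1 hm rfl
  intro d
  induction d with
  | zero =>
    intro m1 hm1 hd
    have : m1 = m2 := by omega
    subst this
    rw [S_zero (j+1) m1 m1 (by omega), Finset.Icc_eq_empty (by omega), Finset.sum_empty]
  | succ d ih =>
    intro m1 hm1 hd
    have h : m1 < m2 := by omega
    rw [S_succ_step j m1 m2 h, ih (m1+1) (by omega) (by omega)]
    have hins : Finset.Icc (m1+1) m2 = insert (m1+1) (Finset.Icc (m1+2) m2) := by
      rw [← Finset.Ioc_insert_left (by omega : m1+1 ≤ m2)]
      congr 1
      ext t; simp; omega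
    rw [hins, Finset.sum_insert (by simp)]
    ring

lemma coeff_S_succ (j k m1 m2 : ℕ) (hm : m1 ≤ m2) :
    PowerSeries.coeff (R := ℚ) (j+1+k) (Sser (j+1) m1 m2) =
      ∑ l ∈ Finset.Icc (m1+1) m2, ∑ n ∈ Finset.Icc 1 (k+1),
        a n l * PowerSeries.coeff (R := ℚ) (j + (k+1-n)) (Sser j l m2) := by
  rw [S_min_formula j m1 m2 hm, map_sum]
  refine Finset.sum_congr rfl fun l _ => ?_
  rw [PowerSeries.coeff_mul, Finset.Nat.sum_antidiagonal_eq_sum_range_succ_mk]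
  have hsub : Finset.Icc 1 (k+1) ⊆ Finset.range (j+1+k).succ := by
    intro n hn; simp only [Finset.mem_Icc] at hn; simp only [Finset.mem_range]; omega
  have hvan : ∀ n ∈ Finset.range (j+1+k).succ, n ∉ Finset.Icc 1 (k+1) →
      PowerSeries.coeff (R := ℚ) n (g ^ l - 1) * PowerSeries.coeff (R := ℚ) (j+1+k-n) (Sser j l m2) = 0 := by
    intro n hn hn2
    simp only [Finset.mem_range] at hn
    simp only [Finset.mem_Icc, not_and, not_le] at hn2
    rcases Nat.eq_zero_or_pos n with rfl | hn0
    · rw [map_sub, PowerSeries.coeff_zero_eq_constantCoeff, map_pow, constCoeff_g, one_pow,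
        map_one, sub_self, zero_mul]
    · have hnk : n ≥ k + 2 := by omega
      rw [coeff_S_eq_zero j l m2 _ (by omega), mul_zero]
  rw [← Finset.sum_subset hsub hvan]
  refine Finset.sum_congr rfl fun n hn => ?_
  simp only [Finset.mem_Icc] at hn
  have e1 : j + 1 + k - n = j + (k+1-n) := by omega
  rw [e1, map_sub, a]
  have : PowerSeries.coeff (R := ℚ) n (1 : PowerSeries ℚ) = 0 := by
    rw [PowerSeries.coeff_one, if_neg (by omega)]
  rw [this, sub_zero]



lemma div_rem (c : ℚ) (T : MvPolynomial (Fin 2) ℚ) :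
    ∃ q, T = (MvPolynomial.X 1 - (MvPolynomial.X 0 + C c)) * q
      + aeval ![MvPolynomial.X 0, MvPolynomial.X 0 + C c] T := by
  induction T using MvPolynomial.induction_on with
  | C r => exact ⟨0, by simp [aeval_C, algebraMap_eq]⟩
  | add p q hp hq =>
    obtain ⟨qp, hqp⟩ := hp
    obtain ⟨qq, hqq⟩ := hq
    exact ⟨qp + qq, by rw [map_add]; nth_rw 1 [hqp, hqq]; ring⟩
  | mul_X p n hp =>
    obtain ⟨qp, hqp⟩ := hp
    fin_cases n <;> simp only [Fin.mk_zero, Fin.mk_one, Fin.isValue]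
    · refine ⟨qp * MvPolynomial.X 0, ?_⟩
      rw [map_mul, aeval_X]
      nth_rw 1 [hqp]
      show _ = _ * _ + _ * (MvPolynomial.X 0 : MvPolynomial (Fin 2) ℚ)
      ring
    · refine ⟨qp * MvPolynomial.X 1 + aeval ![MvPolynomial.X 0, MvPolynomial.X 0 + C c] p, ?_⟩
      rw [map_mul, aeval_X]
      nth_rw 1 [hqp]
      show _ = _ + _ * (MvPolynomial.X 0 + C c : MvPolynomial (Fin 2) ℚ)
      ring

lemma poly_zero_of_nat_roots (r : Polynomial ℚ) (h : ∀ m : ℕ, r.eval (m:ℚ) = 0) : r = 0 := by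
  refine Polynomial.eq_zero_of_infinite_isRoot r ?_
  refine Set.Infinite.mono ?_ (Set.infinite_range_of_injective (Nat.cast_injective (R := ℚ)))
  intro x hx
  obtain ⟨m, rfl⟩ := hx
  exact h m

lemma line_dvd (c : ℚ) (T : MvPolynomial (Fin 2) ℚ)
    (h : ∀ m : ℕ, eval ![(m:ℚ), (m:ℚ) + c] T = 0) :
    ∃ q, T = (MvPolynomial.X 1 - MvPolynomial.X 0 - C c) * q := by
  obtain ⟨q, hq⟩ := div_rem c T
  set r : Polynomial ℚ :=
    aeval ![(Polynomial.X : Polynomial ℚ), Polynomial.X + Polynomial.C c] T with hr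
  have hreval : ∀ m : ℕ, r.eval (m:ℚ) = 0 := by
    intro m
    have hcomp := MvPolynomial.comp_aeval
      (f := ![(Polynomial.X : Polynomial ℚ), Polynomial.X + Polynomial.C c])
      (φ := Polynomial.aeval (m:ℚ))
    have := congrArg (fun ψ => ψ T) hcomp
    simp only [AlgHom.comp_apply] at this
    have heq : r.eval (m:ℚ) = Polynomial.aeval (m:ℚ) r := rfl
    rw [heq, hr, this]
    have harg : (fun i => Polynomial.aeval (m:ℚ)
        ((![(Polynomial.X : Polynomial ℚ), Polynomial.X + Polynomial.C c]) i))
        = ![(m:ℚ), (m:ℚ) + c] := by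
      funext i
      fin_cases i <;> simp
    rw [harg, ← h m]
    rw [MvPolynomial.aeval_def, MvPolynomial.eval]
    rfl
  have hrz : r = 0 := poly_zero_of_nat_roots r hreval
  have hrem : aeval ![(MvPolynomial.X 0 : MvPolynomial (Fin 2) ℚ),
      MvPolynomial.X 0 + C c] T = 0 := by
    have hcomp := MvPolynomial.comp_aeval
      (f := ![(Polynomial.X : Polynomial ℚ), Polynomial.X + Polynomial.C c])
      (φ := (Polynomial.aeval (MvPolynomial.X 0 : MvPolynomial (Fin 2) ℚ) :
        Polynomial ℚ →ₐ[ℚ] MvPolynomial (Fin 2) ℚ))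
    have := congrArg (fun ψ => ψ T) hcomp
    simp only [AlgHom.comp_apply] at this
    have harg : (fun i => (Polynomial.aeval (MvPolynomial.X 0 : MvPolynomial (Fin 2) ℚ))
        ((![(Polynomial.X : Polynomial ℚ), Polynomial.X + Polynomial.C c]) i))
        = ![(MvPolynomial.X 0 : MvPolynomial (Fin 2) ℚ), MvPolynomial.X 0 + C c] := by
      funext i
      fin_cases i <;> simp [algebraMap_eq]
    rw [← harg, ← this, ← hr, hrz, map_zero]
  refine ⟨q, ?_⟩
  rw [hq, hrem, add_zero]
  ring

lemma lines_dvd (j : ℕ) (P : MvPolynomial (Fin 2) ℚ)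
    (h : ∀ i : ℕ, i < j → ∀ m : ℕ, eval ![(m:ℚ), (m:ℚ) + i] P = 0) :
    ∃ T, P = (∏ i ∈ range j, (MvPolynomial.X 1 - MvPolynomial.X 0 - C (i:ℚ))) * T := by
  induction j with
  | zero => exact ⟨P, by simp⟩
  | succ j ih =>
    obtain ⟨T, hT⟩ := ih (fun i hi m => h i (by omega) m)
    have hTline : ∀ m : ℕ, eval ![(m:ℚ), (m:ℚ) + (j:ℚ)] T = 0 := by
      intro m
      have h0 := h j (by omega) m
      rw [hT, eval_mul, eval_prod] at h0
      have hne : (∏ i ∈ range j, eval ![(m:ℚ), (m:ℚ) + (j:ℚ)]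
          (MvPolynomial.X 1 - MvPolynomial.X 0 - C (i:ℚ))) ≠ 0 := by
        refine Finset.prod_ne_zero_iff.2 fun i hi => ?_
        simp only [eval_sub, eval_X, eval_C, Matrix.cons_val_one, Matrix.head_cons,
          Matrix.cons_val_zero]
        have : (i:ℚ) < (j:ℚ) := by
          exact_mod_cast Finset.mem_range.1 hi
        intro hcon
        nlinarith
      rcases mul_eq_zero.1 h0 with h1 | h2
      · exact absurd h1 hne
      · exact h2
    obtain ⟨q, hq⟩ := line_dvd (j:ℚ) T hTline
    refine ⟨q, ?_⟩
    rw [hT, hq, Finset.prod_range_succ]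
    ring



lemma exists_top_degree (p : MvPolynomial (Fin 2) ℚ) (hp : p ≠ 0) :
    ∃ s ∈ p.support, (s.sum fun _ e => e) = p.totalDegree := by
  have hne : p.support.Nonempty := by
    rw [Finset.nonempty_iff_ne_empty, Ne, MvPolynomial.support_eq_empty]
    exact hp
  obtain ⟨s, hs, hsup⟩ := Finset.exists_mem_eq_sup p.support hne
    (fun s => s.sum fun _ e => e)
  exact ⟨s, hs, hsup.symm⟩

lemma degree_eq_sum (s : Fin 2 →₀ ℕ) : s.degree = s.sum fun _ e => e := rfl

lemma degree_eq_w (s : Fin 2 →₀ ℕ) : s.degree = Finsupp.weight 1 s := by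
  rw [Finsupp.degree_eq_weight_one]; rfl

lemma top_component_ne_zero (p : MvPolynomial (Fin 2) ℚ) (hp : p ≠ 0) :
    homogeneousComponent p.totalDegree p ≠ 0 := by
  obtain ⟨s, hs, hdeg⟩ := exists_top_degree p hp
  intro hcon
  have := congrArg (coeff s) hcon
  rw [coeff_homogeneousComponent, coeff_zero] at this
  rw [degree_eq_sum, hdeg, if_pos rfl] at this
  exact (MvPolynomial.mem_support_iff.1 hs) this

lemma td_mul_eq (p q : MvPolynomial (Fin 2) ℚ) (hp : p ≠ 0) (hq : q ≠ 0) :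
    (p * q).totalDegree = p.totalDegree + q.totalDegree := by
  refine le_antisymm (totalDegree_mul p q) ?_
  set a := p.totalDegree
  set b := q.totalDegree
  set P := homogeneousComponent a p
  set Q := homogeneousComponent b q
  have hPQ : P * Q ≠ 0 :=
    mul_ne_zero (top_component_ne_zero p hp) (top_component_ne_zero q hq)
  have hhom : (P * Q).IsHomogeneous (a + b) :=
    (homogeneousComponent_isHomogeneous a p).mul (homogeneousComponent_isHomogeneous b q)
  obtain ⟨s, hs⟩ : ∃ s, s ∈ (P * Q).support := by
    have : (P * Q).support.Nonempty := by
      rw [Finset.nonempty_iff_ne_empty, Ne, MvPolynomial.support_eq_empty]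
      exact hPQ
    exact this
  have hsc : coeff s (P * Q) ≠ 0 := MvPolynomial.mem_support_iff.1 hs
  have hsd : s.degree = a + b := by
    rw [degree_eq_w]
    exact hhom (MvPolynomial.mem_support_iff.1 hs)
  have hkey : coeff s (p * q) = coeff s (P * Q) := by
    rw [MvPolynomial.coeff_mul, MvPolynomial.coeff_mul]
    refine Finset.sum_congr rfl fun uv huv => ?_
    have huvs : uv.1 + uv.2 = s := Finset.HasAntidiagonal.mem_antidiagonal.1 huv
    have hsum : uv.1.degree + uv.2.degree = a + b := by
      rw [degree_eq_w, degree_eq_w, ← map_add, huvs, ← degree_eq_w, hsd]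
    by_cases h1 : uv.1.degree = a
    · have h2 : uv.2.degree = b := by omega
      rw [show coeff uv.1 P = coeff uv.1 p from by
          rw [coeff_homogeneousComponent, if_pos h1],
        show coeff uv.2 Q = coeff uv.2 q from by
          rw [coeff_homogeneousComponent, if_pos h2]]
    · rcases lt_or_gt_of_ne h1 with hlt | hgt
      · have h2 : uv.2.degree > b := by omega
        have : coeff uv.2 q = 0 := by
          refine coeff_eq_zero_of_totalDegree_lt ?_
          rw [degree_eq_sum] at h2
          exact h2
        rw [this, mul_zero]
        rw [show coeff uv.2 Q = 0 from by
          rw [coeff_homogeneousComponent, if_neg (by omega), ], mul_zero]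
      · have : coeff uv.1 p = 0 := by
          refine coeff_eq_zero_of_totalDegree_lt ?_
          rw [degree_eq_sum] at hgt
          exact hgt
        rw [this, zero_mul]
        rw [show coeff uv.1 P = 0 from by
          rw [coeff_homogeneousComponent, if_neg (by omega)], zero_mul]
  have : s ∈ (p * q).support := by
    rw [MvPolynomial.mem_support_iff, hkey]
    exact hsc
  have := le_totalDegree this
  rw [← degree_eq_sum, hsd] at this
  exact this


lemma main (j : ℕ) : ∀ k : ℕ, ∃ P : MvPolynomial (Fin 2) ℚ, P.totalDegree ≤ 2*j + k ∧
    ∀ m1 m2 : ℕ, m1 ≤ m2 →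
      PowerSeries.coeff (R := ℚ) (j + k) (Sser j m1 m2) = eval ![(m1:ℚ), (m2:ℚ)] P := by
  induction j with
  | zero =>
    intro k
    refine ⟨C (if k = 0 then 1 else 0), ?_, ?_⟩
    · rw [totalDegree_C]; omega
    · intro m1 m2 _
      rw [S_zero', eval_C, show (0 + k) = k from by omega, PowerSeries.coeff_one]
  | succ j ih =>
    intro k
    choose Pj hPdeg hPev using ih
    set G : MvPolynomial (Fin 2) ℚ := ∑ n ∈ Finset.Icc 1 (k+1), ap n * Pj (k+1-n) with hG
    have hGdeg : G.totalDegree ≤ 2*j + k + 1 := by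
      refine totalDegree_finsetSum_le fun n hn => ?_
      simp only [Finset.mem_Icc] at hn
      refine (totalDegree_mul _ _).trans ?_
      have h1 := ap_totalDegree n
      have h2 := hPdeg (k+1-n)
      omega
    obtain ⟨Q, hQdeg, hQev⟩ := sump G
    refine ⟨Q, by omega, ?_⟩
    intro m1 m2 hm
    rw [show j + 1 + k = j + 1 + k from rfl, coeff_S_succ j k m1 m2 hm, hQev m1 m2 hm]
    refine Finset.sum_congr rfl fun l hl => ?_
    have hlm : l ≤ m2 := (Finset.mem_Icc.1 hl).2
    rw [hG, map_sum]
    refine Finset.sum_congr rfl fun n hn => ?_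
    rw [eval_mul, eval_ap n l _ rfl, hPev (k+1-n) l m2 hlm, ← a_closed]

def Dj (j : ℕ) : MvPolynomial (Fin 2) ℚ :=
  ∏ i ∈ range j, (MvPolynomial.X 1 - MvPolynomial.X 0 - C (i:ℚ))

lemma dline_facts (c : ℚ) :
    (MvPolynomial.X 1 - MvPolynomial.X 0 - C c : MvPolynomial (Fin 2) ℚ) ≠ 0 ∧
    (MvPolynomial.X 1 - MvPolynomial.X 0 - C c : MvPolynomial (Fin 2) ℚ).totalDegree = 1 := by
  have hc : coeff (Finsupp.single 1 1)
      (MvPolynomial.X 1 - MvPolynomial.X 0 - C c : MvPolynomial (Fin 2) ℚ) = 1 := by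
    rw [MvPolynomial.coeff_sub, MvPolynomial.coeff_sub, MvPolynomial.coeff_X_same]
    rw [MvPolynomial.coeff_X', if_neg (by
      simp [Finsupp.single_eq_single_iff, Fin.ext_iff])]
    rw [MvPolynomial.coeff_C, if_neg (by
      intro h
      have := congrArg (fun f : Fin 2 →₀ ℕ => f 1) h
      simp at this)]
    ring
  have hmem : Finsupp.single (1 : Fin 2) 1 ∈
      (MvPolynomial.X 1 - MvPolynomial.X 0 - C c : MvPolynomial (Fin 2) ℚ).support := by
    rw [MvPolynomial.mem_support_iff, hc]; exact one_ne_zero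
  constructor
  · intro h; rw [h] at hc; simp at hc
  · refine le_antisymm ?_ ?_
    · refine (totalDegree_sub _ _).trans (max_le ((totalDegree_sub _ _).trans
        (max_le ?_ ?_)) ?_)
      · exact le_of_eq (totalDegree_X _)
      · exact le_of_eq (totalDegree_X _)
      · rw [totalDegree_C]; omega
    · have := le_totalDegree hmem
      rwa [Finsupp.sum_single_index rfl] at this

lemma Dj_facts (j : ℕ) : Dj j ≠ 0 ∧ (Dj j).totalDegree = j := by
  induction j with
  | zero => exact ⟨by simp [Dj], by simp [Dj]⟩
  | succ j ih =>
    have hd := dline_facts ((j:ℕ):ℚ)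
    have hD : Dj (j+1) = Dj j *
        (MvPolynomial.X 1 - MvPolynomial.X 0 - C ((j:ℕ):ℚ)) := by
      rw [Dj, Finset.prod_range_succ, Dj]
    constructor
    · rw [hD]; exact mul_ne_zero ih.1 hd.1
    · rw [hD, td_mul_eq _ _ ih.1 hd.1, ih.2, hd.2]

lemma hTex (j k : ℕ) : ∃ t : MvPolynomial (Fin 2) ℚ, t.totalDegree ≤ j + k ∧
    ∀ m1 m2 : ℕ, m1 ≤ m2 → PowerSeries.coeff (R := ℚ) (j+k) (Sser j m1 m2) =
      (∏ i ∈ range j, ((m2:ℚ) - (m1:ℚ) - (i:ℚ))) * eval ![(m1:ℚ), (m2:ℚ)] t := by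
  obtain ⟨P, hPdeg, hPev⟩ := main j k
  have hlines : ∀ i : ℕ, i < j → ∀ m : ℕ, eval ![(m:ℚ), (m:ℚ)+(i:ℚ)] P = 0 := by
    intro i hi m
    have h0 := hPev m (m+i) (by omega)
    rw [S_zero j m (m+i) (by omega), map_zero] at h0
    push_cast at h0
    exact h0.symm
  obtain ⟨T0, hT0⟩ := lines_dvd j P hlines
  have hevalD : ∀ m1 m2 : ℕ, eval ![(m1:ℚ), (m2:ℚ)] (Dj j)
      = ∏ i ∈ range j, ((m2:ℚ) - (m1:ℚ) - (i:ℚ)) := by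
    intro m1 m2
    rw [Dj, eval_prod]
    refine Finset.prod_congr rfl fun i _ => ?_
    simp
  rw [show (∏ i ∈ range j, (MvPolynomial.X 1 - MvPolynomial.X 0 - C (i:ℚ) :
    MvPolynomial (Fin 2) ℚ)) = Dj j from rfl] at hT0
  by_cases hT0z : T0 = 0
  · refine ⟨0, by simp, fun m1 m2 hm => ?_⟩
    rw [hPev m1 m2 hm, hT0, hT0z]
    simp
  · refine ⟨T0, ?_, ?_⟩
    · have hD := Dj_facts j
      have := td_mul_eq (Dj j) T0 hD.1 hT0z
      rw [← hT0, hD.2] at this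
      omega
    · intro m1 m2 hm
      rw [hPev m1 m2 hm, hT0, eval_mul, hevalD]

end

end Stmt9Aux

/-- Lemma A.3: for `Σ_j(m₁,m₂) = ∑_{A ⊆ {m₁+1,…,m₂}, |A| = j} ∏_{l ∈ A} ((1+h)^{-l} - 1)`
in `ℚ[[h]]`, the coefficient of `h^p` vanishes for `p < j`, and there are polynomials
`T_{j,k} ∈ ℚ[X,Y]` of total degree at most `j + k` with coefficient of `h^{j+k}` in
`Σ_j(m₁,m₂)` equal to `(∏_{i=0}^{j-1} (m₂ - m₁ - i)) · T_{j,k}(m₁,m₂)`. -/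
theorem stmt_9 :
    let S : ℕ → ℕ → ℕ → PowerSeries ℚ := fun j m₁ m₂ =>
      ∑ A ∈ Finset.powersetCard j (Finset.Icc (m₁ + 1) m₂),
        ∏ l ∈ A, (((1 + PowerSeries.X : PowerSeries ℚ)⁻¹) ^ l - 1)
    (∀ j m₁ m₂ : ℕ, m₁ ≤ m₂ → ∀ p : ℕ, p < j → PowerSeries.coeff (R := ℚ) p (S j m₁ m₂) = 0) ∧
      ∃ T : ℕ → ℕ → MvPolynomial (Fin 2) ℚ,
        (∀ j k : ℕ, (T j k).totalDegree ≤ j + k) ∧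
        ∀ j k m₁ m₂ : ℕ, m₁ ≤ m₂ →
          PowerSeries.coeff (R := ℚ) (j + k) (S j m₁ m₂) =
            (∏ i ∈ Finset.range j, ((m₂ : ℚ) - (m₁ : ℚ) - (i : ℚ))) *
              MvPolynomial.eval ![(m₁ : ℚ), (m₂ : ℚ)] (T j k) := by
  intro S
  have hS : ∀ j m₁ m₂, S j m₁ m₂ = Stmt9Aux.Sser j m₁ m₂ := fun _ _ _ => rfl
  constructor
  · intro j m₁ m₂ _ p hp
    rw [hS]
    exact Stmt9Aux.coeff_S_eq_zero j m₁ m₂ p hp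
  · choose T hTdeg hTev using fun jk : ℕ × ℕ => Stmt9Aux.hTex jk.1 jk.2
    refine ⟨fun j k => T (j, k), fun j k => hTdeg (j, k), ?_⟩
    intro j k m₁ m₂ hm
    rw [hS]
    exact hTev (j, k) m₁ m₂ hm
end
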